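/- Every λpar-reduction step is simulated by one or more λsub-steps under the translation ◦: if t →_{λpar} t' for λ-terms t, t', then t° →⁺_{λsub} t'°. -/

import Mathlib

/-! # Λ-terms with explicit substitutions (λsub calculus) -/

inductive Tm : Type
  | var : ℕ → Tm
  | app : Tm → Tm → Tm
  | lam : ℕ → Tm → Tm
  | esub : ℕ → Tm → Tm → Tm   -- esub x t u  is  t[x/u]
  deriving DecidableEq

namespace Tm

/-- free variables -/
def fv : Tm → Finset ℕ
  | var x => {x}
  | app t u => fv t ∪ fv u
  | lam x t => fv t \ {x}
  | esub x t u => (fv t \ {x}) ∪ fv u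

/-- implicit (capture-avoiding, under the bound-variable convention) substitution -/
def subst (x : ℕ) (v : Tm) : Tm → Tm
  | var y => if y = x then v else var y
  | app t u => app (subst x v t) (subst x v u)
  | lam y t => lam y (subst x v t)
  | esub y t u => esub y (subst x v t) (subst x v u)

/-- `Repl x u t t'` : `t'` is obtained from `t` by replacing exactly one free
occurrence of `x` by `u`, without capture of `x` or the free variables of `u`. -/
inductive Repl (x : ℕ) (u : Tm) : Tm → Tm → Prop
  | var : Repl x u (var x) u
  | appL {t t' s} : Repl x u t t' → Repl x u (app t s) (app t' s)
  | appR {t s s'} : Repl x u s s' → Repl x u (app t s) (app t s')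
  | lam {y t t'} : y ≠ x → y ∉ fv u → Repl x u t t' → Repl x u (lam y t) (lam y t')
  | esubL {y t t' s} : y ≠ x → y ∉ fv u → Repl x u t t' → Repl x u (esub y t s) (esub y t' s)
  | esubR {y t s s'} : Repl x u s s' → Repl x u (esub y t s) (esub y t s')

/-- root reduction rules of λsub: B, Gc, R -/
inductive LsubRoot : Tm → Tm → Prop
  | B {x t u} : LsubRoot (app (lam x t) u) (esub x t u)
  | Gc {x t u} : x ∉ fv t → LsubRoot (esub x t u) t
  | R {x t t' u} : Repl x u t t' → LsubRoot (esub x t u) (esub x t' u)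

/-- root rules of the substitution subcalculus: Gc, R -/
inductive SubRoot : Tm → Tm → Prop
  | Gc {x t u} : x ∉ fv t → SubRoot (esub x t u) t
  | R {x t t' u} : Repl x u t t' → SubRoot (esub x t u) (esub x t' u)

/-- root rule B only -/
inductive BRoot : Tm → Tm → Prop
  | B {x t u} : BRoot (app (lam x t) u) (esub x t u)

/-- root β-rule (full implicit substitution) -/
inductive BetaRoot : Tm → Tm → Prop
  | beta {x t u} : BetaRoot (app (lam x t) u) (subst x u t)

/-- root rules of the partial λpar-calculus: β_p and BGc -/
inductive LparRoot : Tm → Tm → Prop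
  | betaP {x t t' u} : Repl x u t t' → LparRoot (app (lam x t) u) (app (lam x t') u)
  | BGc {x t u} : x ∉ fv t → LparRoot (app (lam x t) u) t

/-- closure of a root relation under all contexts -/
inductive Ctx (r : Tm → Tm → Prop) : Tm → Tm → Prop
  | root {t t'} : r t t' → Ctx r t t'
  | appL {t t' s} : Ctx r t t' → Ctx r (app t s) (app t' s)
  | appR {t s s'} : Ctx r s s' → Ctx r (app t s) (app t s')
  | lam {y t t'} : Ctx r t t' → Ctx r (lam y t) (lam y t')
  | esubL {y t t' s} : Ctx r t t' → Ctx r (esub y t s) (esub y t' s)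
  | esubR {y t s s'} : Ctx r s s' → Ctx r (esub y t s) (esub y t s')

def LsubStep : Tm → Tm → Prop := Ctx LsubRoot
def SubStep : Tm → Tm → Prop := Ctx SubRoot
def BStep : Tm → Tm → Prop := Ctx BRoot
def BetaStep : Tm → Tm → Prop := Ctx BetaRoot
def LparStep : Tm → Tm → Prop := Ctx LparRoot
/-- λdef: λsub rules together with full β -/
def LdefStep : Tm → Tm → Prop := Ctx (fun a b => LsubRoot a b ∨ BetaRoot a b)

/-- pure λ-terms: no explicit substitution -/
def IsPure : Tm → Prop
  | var _ => True
  | app t u => IsPure t ∧ IsPure u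
  | lam _ t => IsPure t
  | esub _ _ _ => False

/-- strong normalisation of `t` for the relation `r` -/
def SN (r : Tm → Tm → Prop) (t : Tm) : Prop := Acc (fun a b => r b a) t

/-- translation ° from λ-terms to Λ-terms -/
def parlm : Tm → Tm
  | var x => var x
  | lam x t => lam x (parlm t)
  | esub x t u => esub x (parlm t) (parlm u)
  | app (lam x v) u => esub x (parlm v) (parlm u)
  | app (var x) u => app (var x) (parlm u)
  | app (app a b) u => app (parlm (app a b)) (parlm u)
  | app (esub y a b) u => app (parlm (esub y a b)) (parlm u)

/-- unfolding ⌊·⌋ from Λ-terms to λ-terms -/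
def unf : Tm → Tm
  | var x => var x
  | app t u => app (unf t) (unf u)
  | lam x t => lam x (unf t)
  | esub x t u => app (lam x (unf t)) (unf u)

end Tm

/-! # Λ-metaterms -/

inductive MTm : Type
  | var : ℕ → MTm
  | mvar : Finset ℕ → MTm
  | app : MTm → MTm → MTm
  | lam : ℕ → MTm → MTm
  | esub : ℕ → MTm → MTm → MTm

namespace MTm

def fv : MTm → Finset ℕ
  | var x => {x}
  | mvar Δ => Δ
  | app t u => fv t ∪ fv u
  | lam x t => fv t \ {x}
  | esub x t u => (fv t \ {x}) ∪ fv u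

/-- replacement of exactly one free occurrence of the variable x by u -/
inductive MRepl (x : ℕ) (u : MTm) : MTm → MTm → Prop
  | var : MRepl x u (var x) u
  | appL {t t' s} : MRepl x u t t' → MRepl x u (app t s) (app t' s)
  | appR {t s s'} : MRepl x u s s' → MRepl x u (app t s) (app t s')
  | lam {y t t'} : y ≠ x → y ∉ fv u → MRepl x u t t' → MRepl x u (lam y t) (lam y t')
  | esubL {y t t' s} : y ≠ x → y ∉ fv u → MRepl x u t t' → MRepl x u (esub y t s) (esub y t' s)
  | esubR {y t s s'} : MRepl x u s s' → MRepl x u (esub y t s) (esub y t s')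

/-- `MReplX x Δ u b t t'` : `t'` is obtained from `t` by replacing one occurrence of the
metavariable `X_Δ` by `X_Δ[x/u]`, at a position which is *not* on the left spine of
substitutions starting from the attached substitution (flag `b = true` means the current
position is still on that spine, where attaching is forbidden). -/
inductive MReplX (x : ℕ) (Δ : Finset ℕ) (u : MTm) : Bool → MTm → MTm → Prop
  | mvar : MReplX x Δ u false (mvar Δ) (esub x (mvar Δ) u)
  | appL {b t t' s} : MReplX x Δ u false t t' → MReplX x Δ u b (app t s) (app t' s)
  | appR {b t s s'} : MReplX x Δ u false s s' → MReplX x Δ u b (app t s) (app t s')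
  | lam {b y t t'} : y ≠ x → y ∉ fv u → MReplX x Δ u false t t' →
      MReplX x Δ u b (lam y t) (lam y t')
  | esubL {b y t t' s} : y ≠ x → y ∉ fv u → MReplX x Δ u b t t' →
      MReplX x Δ u b (esub y t s) (esub y t' s)
  | esubR {b y t s s'} : MReplX x Δ u false s s' → MReplX x Δ u b (esub y t s) (esub y t s')

/-- root rules of the substitution calculus `sub` on metaterms: Gc, R, R_X -/
inductive MSubRoot : MTm → MTm → Prop
  | Gc {x t u} : x ∉ fv t → MSubRoot (esub x t u) t
  | R {x t t' u} : MRepl x u t t' → MSubRoot (esub x t u) (esub x t' u)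
  | RX {x Δ t t' u} : x ∈ Δ → MReplX x Δ u true t t' → MSubRoot (esub x t u) (esub x t' u)

inductive MCtx (r : MTm → MTm → Prop) : MTm → MTm → Prop
  | root {t t'} : r t t' → MCtx r t t'
  | appL {t t' s} : MCtx r t t' → MCtx r (app t s) (app t' s)
  | appR {t s s'} : MCtx r s s' → MCtx r (app t s) (app t s')
  | lam {y t t'} : MCtx r t t' → MCtx r (lam y t) (lam y t')
  | esubL {y t t' s} : MCtx r t t' → MCtx r (esub y t s) (esub y t' s)
  | esubR {y t s s'} : MCtx r s s' → MCtx r (esub y t s) (esub y t s')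

/-- one-step sub-reduction on metaterms -/
def MSubStep : MTm → MTm → Prop := MCtx MSubRoot

/-- the commutation equivalence =_C of independent substitutions -/
inductive MCEq : MTm → MTm → Prop
  | comm {x y t u v} : x ≠ y → y ∉ fv u → x ∉ fv v →
      MCEq (esub y (esub x t u) v) (esub x (esub y t v) u)
  | refl (t) : MCEq t t
  | symm {t t'} : MCEq t t' → MCEq t' t
  | trans {t t' t''} : MCEq t t' → MCEq t' t'' → MCEq t t''
  | appL {t t' s} : MCEq t t' → MCEq (app t s) (app t' s)
  | appR {t s s'} : MCEq s s' → MCEq (app t s) (app t s')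
  | lam {y t t'} : MCEq t t' → MCEq (lam y t) (lam y t')
  | esubL {y t t' s} : MCEq t t' → MCEq (esub y t s) (esub y t' s)
  | esubR {y t s s'} : MCEq s s' → MCEq (esub y t s) (esub y t s')

/-- `spineMem y t = true` iff `t` is of the form `X_Δ[x₁/u₁]…[xₙ/uₙ]` with `y ∈ Δ`. -/
def spineMem (y : ℕ) : MTm → Bool
  | mvar Δ => decide (y ∈ Δ)
  | esub _ t _ => spineMem y t
  | _ => false

/-- the occurrence-counting measure m -/
def m : MTm → ℕ → ℕ
  | var y, x => if y = x then 1 else 0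
  | mvar Δ, x => if x ∈ Δ then 1 else 0
  | app t u, x => m t x + m u x
  | lam _ t, x => m t x
  | esub y t u, x =>
      if spineMem y t then m t x + m t y * m u x
      else m t x + m u x + m t y * m u x

/-- the size measure s -/
def s : MTm → ℕ
  | var _ => 1
  | mvar Δ => Δ.card
  | app t u => s t + s u
  | lam _ t => s t
  | esub x t u =>
      if spineMem x t then s t - 1 + m t x * s u
      else s t + s u + m t x * s u

/-- implicit (capture-avoiding) substitution on metaterms; on a metavariable containing
`x` it attaches an explicit substitution -/
def msubst (x : ℕ) (v : MTm) : MTm → MTm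
  | var y => if y = x then v else var y
  | mvar Δ => if x ∈ Δ then esub x (mvar Δ) v else mvar Δ
  | app t u => app (msubst x v t) (msubst x v u)
  | lam y t => lam y (msubst x v t)
  | esub y t u => esub y (msubst x v t) (msubst x v u)

/-- normal form for a relation -/
def NF (r : MTm → MTm → Prop) (t : MTm) : Prop := ∀ u, ¬ r t u

end MTm

/-! # Types -/

inductive Ty : Type
  | base : ℕ → Ty
  | arrow : Ty → Ty → Ty
  | inter : Ty → Ty → Ty
  deriving DecidableEq

namespace Ty

/-- the preorder ≪ on intersection types -/
inductive Le : Ty → Ty → Prop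
  | refl (A) : Le A A
  | interL {A B} : Le (inter A B) A
  | interR {A B} : Le (inter A B) B
  | trans {A B C} : Le A B → Le B C → Le A C
  | pair {A B C} : Le A B → Le A C → Le A (inter B C)

/-- a type which is not an intersection -/
def IsInterFree : Ty → Prop
  | inter _ _ => False
  | _ => True

/-- A₁ ∩ … ∩ Aₙ -/
def bigInter (A : Ty) (l : List Ty) : Ty := l.foldl inter A

end Ty

abbrev Env := ℕ → Option Ty

/-- environment update Γ, x:A -/
def Env.upd (Γ : Env) (x : ℕ) (A : Ty) : Env := fun y => if y = x then some A else Γ y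

/-- the additive intersection type system add^i for Λ-terms -/
inductive Der : Env → Tm → Ty → Prop
  | ax {Γ x A} : Γ x = some A → Der Γ (Tm.var x) A
  | app {Γ t u A B} : Der Γ t (Ty.arrow A B) → Der Γ u A → Der Γ (Tm.app t u) B
  | abs {Γ x t A B} : Der (Γ.upd x A) t B → Der Γ (Tm.lam x t) (Ty.arrow A B)
  | subs {Γ x t u A B} : Der Γ u B → Der (Γ.upd x B) t A → Der Γ (Tm.esub x t u) A
  | interI {Γ t A B} : Der Γ t A → Der Γ t B → Der Γ t (Ty.inter A B)
  | interE1 {Γ t A B} : Der Γ t (Ty.inter A B) → Der Γ t A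
  | interE2 {Γ t A B} : Der Γ t (Ty.inter A B) → Der Γ t B

/-! # Simple types -/

inductive STy : Type
  | base : ℕ → STy
  | arrow : STy → STy → STy
  deriving DecidableEq

abbrev SEnv := ℕ → Option STy

def SEnv.upd (Γ : SEnv) (x : ℕ) (A : STy) : SEnv := fun y => if y = x then some A else Γ y

/-- the additive simple type system for λ-terms -/
inductive SDer : SEnv → Tm → STy → Prop
  | ax {Γ x A} : Γ x = some A → SDer Γ (Tm.var x) A
  | app {Γ t u A B} : SDer Γ t (STy.arrow A B) → SDer Γ u A → SDer Γ (Tm.app t u) B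
  | abs {Γ x t A B} : SDer (Γ.upd x A) t B → SDer Γ (Tm.lam x t) (STy.arrow A B)


/-! ## Auxiliary lemmas for the simulation -/

namespace Tm

open Relation

lemma fv_parlm : ∀ t : Tm, IsPure t → fv (parlm t) = fv t := by
  intro t
  induction t with
  | var x => intro _; rfl
  | lam x u ih =>
      intro h
      have := ih h
      simp only [parlm, fv, this]
  | esub x a b iha ihb => intro h; exact h.elim
  | app a b iha ihb =>
      intro h
      obtain ⟨ha, hb⟩ := h
      cases a with
      | var y => simp only [parlm, fv, ihb hb]
      | lam y v =>
          have hv := iha ha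
          simp only [parlm, fv] at hv ⊢
          rw [hv, ihb hb]
      | app c d => simp only [parlm, fv, iha ha, ihb hb]
      | esub y c d => exact ha.elim

lemma step_to_parlm_app (u s0 : Tm) :
    ReflTransGen LsubStep (app (parlm u) (parlm s0)) (parlm (app u s0)) := by
  cases u with
  | var _ => exact ReflTransGen.refl
  | app _ _ => exact ReflTransGen.refl
  | esub _ _ _ => exact ReflTransGen.refl
  | lam y v => exact ReflTransGen.single (Ctx.root LsubRoot.B)

lemma lsub_lam_step_inv {y a c} (h : LsubStep (lam y a) c) :
    ∃ b, c = lam y b ∧ LsubStep a b := by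
  cases h with
  | root r => cases r
  | lam h => exact ⟨_, rfl, h⟩

lemma lsub_lam_rtg_inv {y a d} (h : ReflTransGen LsubStep (lam y a) d) :
    ∃ b, d = lam y b ∧ ReflTransGen LsubStep a b := by
  induction h with
  | refl => exact ⟨a, rfl, ReflTransGen.refl⟩
  | tail _ hstep ih =>
      obtain ⟨b, rfl, hb⟩ := ih
      obtain ⟨b', rfl, hb'⟩ := lsub_lam_step_inv hstep
      exact ⟨b', rfl, hb.tail hb'⟩

lemma lsub_lam_tg_inv {y a d} (h : TransGen LsubStep (lam y a) d) :
    ∃ b, d = lam y b ∧ TransGen LsubStep a b := by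
  induction h with
  | single hstep =>
      obtain ⟨b, rfl, hb⟩ := lsub_lam_step_inv hstep
      exact ⟨b, rfl, TransGen.single hb⟩
  | tail _ hstep ih =>
      obtain ⟨b, rfl, hb⟩ := ih
      obtain ⟨b', rfl, hb'⟩ := lsub_lam_step_inv hstep
      exact ⟨b', rfl, hb.tail hb'⟩

lemma lpar_var_inv {x c} (h : LparStep (var x) c) : False := by
  cases h with
  | root r => cases r

lemma lpar_lam_inv {y a c} (h : LparStep (lam y a) c) :
    ∃ b, c = lam y b ∧ LparStep a b := by
  cases h with
  | root r => cases r
  | lam h => exact ⟨_, rfl, h⟩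

lemma repl_parlm' {x : ℕ} {u : Tm} (hu : IsPure u) :
    ∀ {t t' : Tm}, IsPure t → Repl x u t t' →
      ∃ s, Repl x (parlm u) (parlm t) s ∧ ReflTransGen LsubStep s (parlm t') := by
  intro t t' ht h
  induction h with
  | var => exact ⟨parlm u, Repl.var, ReflTransGen.refl⟩
  | @appL a a' s0 inner ih =>
      obtain ⟨ha, hs0⟩ := ht
      cases a with
      | var y =>
          obtain ⟨s, hrs, hsteps⟩ := ih ha
          refine ⟨app s (parlm s0), Repl.appL hrs, ?_⟩
          exact (ReflTransGen.lift (fun z => app z (parlm s0))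
            (fun _ _ h => Ctx.appL h) _ _ hsteps).trans (step_to_parlm_app a' s0)
      | app c d =>
          obtain ⟨s, hrs, hsteps⟩ := ih ha
          refine ⟨app s (parlm s0), Repl.appL hrs, ?_⟩
          exact (ReflTransGen.lift (fun z => app z (parlm s0))
            (fun _ _ h => Ctx.appL h) _ _ hsteps).trans (step_to_parlm_app a' s0)
      | esub y c d => exact ha.elim
      | lam y v =>
          cases inner with
          | @lam _ _ v' hne hnfv hv =>
            obtain ⟨s, hrs, hsteps⟩ := ih ha
            cases hrs with
            | lam hne' hnfv' hw =>
              obtain ⟨w', heq, hsteps'⟩ := lsub_lam_rtg_inv hsteps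
              simp only [parlm] at heq
              have hw2 : w' = parlm v' := by
                injection heq with _ h2
                exact h2.symm
              subst hw2
              refine ⟨esub y _ (parlm s0), Repl.esubL hne' hnfv' hw, ?_⟩
              exact ReflTransGen.lift (fun z => esub y z (parlm s0))
                (fun _ _ h => Ctx.esubL h) _ _ hsteps'
  | @appR a b b' inner ih =>
      obtain ⟨ha, hb⟩ := ht
      obtain ⟨s, hrs, hsteps⟩ := ih hb
      cases a with
      | var y =>
          exact ⟨app _ s, Repl.appR hrs,
            ReflTransGen.lift (fun z => app (parlm (var y)) z)
              (fun _ _ h => Ctx.appR h) _ _ hsteps⟩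
      | app c d =>
          exact ⟨app _ s, Repl.appR hrs,
            ReflTransGen.lift (fun z => app (parlm (app c d)) z)
              (fun _ _ h => Ctx.appR h) _ _ hsteps⟩
      | esub y c d => exact ha.elim
      | lam y v =>
          exact ⟨esub y (parlm v) s, Repl.esubR hrs,
            ReflTransGen.lift (fun z => esub y (parlm v) z)
              (fun _ _ h => Ctx.esubR h) _ _ hsteps⟩
  | @lam y a a' hne hnfv inner ih =>
      obtain ⟨s, hrs, hsteps⟩ := ih ht
      refine ⟨lam y s, Repl.lam hne ?_ hrs, ?_⟩
      · rw [fv_parlm u hu]; exact hnfv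
      · exact ReflTransGen.lift (fun z => lam y z) (fun _ _ h => Ctx.lam h) _ _ hsteps
  | esubL _ _ _ _ => exact ht.elim
  | esubR _ _ => exact ht.elim

end Tm

open Tm Relation in
lemma lpar_sim : ∀ {t t' : Tm}, LparStep t t' → IsPure t →
    TransGen LsubStep (parlm t) (parlm t') := by
  intro t t' h
  induction h with
  | root r =>
      intro hp
      cases r with
      | @betaP x t0 t0' u hrepl =>
          obtain ⟨s, hs, hsteps⟩ := repl_parlm' hp.2 (show IsPure t0 from hp.1) hrepl
          exact TransGen.head' (Ctx.root (LsubRoot.R hs))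
            (ReflTransGen.lift (fun z => esub x z (parlm u))
              (fun _ _ h => Ctx.esubL h) _ _ hsteps)
      | @BGc x t0 u hfv =>
          rename_i t1
          refine TransGen.single (Ctx.root (LsubRoot.Gc ?_))
          rw [fv_parlm t1 (show IsPure t1 from hp.1)]; exact hfv
  | @appL a a' s0 h ih =>
      intro hp
      cases a with
      | var y => exact (lpar_var_inv h).elim
      | esub y c d => exact hp.1.elim
      | lam y v =>
          obtain ⟨v', rfl, hv⟩ := lpar_lam_inv h
          have htg : TransGen LsubStep (lam y (parlm v)) (parlm (lam y v')) := ih hp.1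
          obtain ⟨b, heq, hb⟩ := lsub_lam_tg_inv htg
          simp only [parlm] at heq
          have hb2 : b = parlm v' := by injection heq with _ h2; exact h2.symm
          subst hb2
          exact TransGen.lift (fun z => esub y z (parlm s0)) (fun _ _ h => Ctx.esubL h) _ _ hb
      | app c d =>
          have h1 : TransGen LsubStep (app (parlm (app c d)) (parlm s0))
              (app (parlm a') (parlm s0)) :=
            TransGen.lift (fun z => app z (parlm s0)) (fun _ _ h => Ctx.appL h) _ _ (ih hp.1)
          exact h1.trans_left (step_to_parlm_app a' s0)
  | @appR a b b' h ih =>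
      intro hp
      cases a with
      | esub y c d => exact hp.1.elim
      | var y =>
          exact TransGen.lift (fun z => app (var y) z) (fun _ _ h => Ctx.appR h) _ _ (ih hp.2)
      | app c d =>
          exact TransGen.lift (fun z => app (parlm (app c d)) z)
            (fun _ _ h => Ctx.appR h) _ _ (ih hp.2)
      | lam y v =>
          exact TransGen.lift (fun z => esub y (parlm v) z)
            (fun _ _ h => Ctx.esubR h) _ _ (ih hp.2)
  | @lam y a a' h ih =>
      intro hp
      exact TransGen.lift (fun z => lam y z) (fun _ _ h => Ctx.lam h) _ _ (ih hp)
  | esubL _ _ => intro hp; exact hp.elim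
  | esubR _ _ => intro hp; exact hp.elim

/-- the translation ° maps each λpar-step to a non-empty
λsub-reduction sequence -/
theorem parlm_simulation (t t' : Tm) (hpure : Tm.IsPure t) (h : Tm.LparStep t t') :
    Relation.TransGen Tm.LsubStep (Tm.parlm t) (Tm.parlm t') :=
  lpar_sim h hpure
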